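/- arXiv:1703.06401 — 2 statements merged into one kernel-verified Lean document; each statement's English description precedes it below -/
import Mathlib

section
/- For every positive integer n, S_n(4) = (1/24)(H_n^4 + 6 H_n^2 H_n^{(2)} + 8 H_n H_n^{(3)} + 3 (H_n^{(2)})^2 + 6 H_n^{(4)}), where S_n(4) = ∑_{k=1}^n C(n,k)(-1)^{k-1}/k^4. -/
noncomputable def myS (r n : ℕ) : ℝ :=
  ∑ k ∈ Finset.Icc 1 n, (Nat.choose n k : ℝ) * (-1) ^ (k - 1) / (k : ℝ) ^ r

noncomputable def myh (r n : ℕ) : ℝ := ∑ k ∈ Finset.Icc 1 n, (1 : ℝ) / (k : ℝ) ^ r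

lemma myh_succ (r n : ℕ) : myh r (n+1) = myh r n + 1 / ((n:ℝ)+1) ^ r := by
  rw [myh, Finset.sum_Icc_succ_top (by omega), myh]
  push_cast; ring

lemma key (r n : ℕ) :
    myS (r+1) (n+1) = myS (r+1) n + myS r (n+1) / ((n:ℝ)+1) := by
  have h1 : myS (r+1) n
      = ∑ k ∈ Finset.Icc 1 (n+1), (Nat.choose n k : ℝ) * (-1) ^ (k - 1) / (k : ℝ) ^ (r+1) := by
    rw [Finset.sum_Icc_succ_top (by omega), Nat.choose_succ_self]
    simp [myS]
  rw [h1, myS, myS, Finset.sum_div, ← sub_eq_iff_eq_add', ← Finset.sum_sub_distrib]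
  refine Finset.sum_congr rfl ?_
  intro k hk
  simp only [Finset.mem_Icc] at hk
  obtain ⟨j, rfl⟩ : ∃ j, k = j + 1 := ⟨k - 1, by omega⟩
  have hp : (Nat.choose (n+1) (j+1) : ℝ) = Nat.choose n j + Nat.choose n (j+1) := by
    rw [Nat.choose_succ_succ]; push_cast; ring
  have hc : ((n:ℝ)+1) * Nat.choose n j = (Nat.choose (n+1) (j+1) : ℝ) * ((j:ℝ)+1) := by
    exact_mod_cast congrArg Nat.cast (Nat.add_one_mul_choose_eq n j)
  have hj : ((j:ℝ)+1) ≠ 0 := by positivity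
  have hn : ((n:ℝ)+1) ≠ 0 := by positivity
  simp only [Nat.add_sub_cancel]
  push_cast
  rw [hp]
  have hc' : ((n:ℝ)+1) * Nat.choose n j
      = ((Nat.choose n j : ℝ) + Nat.choose n (j+1)) * ((j:ℝ)+1) := by rw [← hp]; exact hc
  field_simp
  linear_combination (((j:ℝ)+1)^r) * hc'

lemma myS_zero_arg (r : ℕ) : myS r 0 = 0 := by simp [myS]

lemma myS0 (n : ℕ) (hn : 1 ≤ n) : myS 0 n = 1 := by
  have h := Int.alternating_sum_range_choose (n := n)
  rw [if_neg (by omega)] at h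
  have h' : (∑ i ∈ Finset.range (n + 1), (-1 : ℝ) ^ i * n.choose i) = 0 := by
    exact_mod_cast congrArg (fun z : ℤ => (z : ℝ)) h
  have hsplit : Finset.range (n+1) = insert 0 (Finset.Icc 1 n) := by
    ext x; simp [Finset.mem_range, Finset.mem_Icc]; omega
  rw [hsplit, Finset.sum_insert (by simp)] at h'
  simp only [pow_zero, Nat.choose_zero_right, Nat.cast_one, one_mul] at h'
  have : (∑ i ∈ Finset.Icc 1 n, (-1 : ℝ) ^ i * n.choose i) = -1 := by linarith
  rw [myS]
  calc ∑ k ∈ Finset.Icc 1 n, (n.choose k : ℝ) * (-1) ^ (k - 1) / (k:ℝ)^0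
      = ∑ k ∈ Finset.Icc 1 n, -((-1:ℝ)^k * n.choose k) := by
        refine Finset.sum_congr rfl ?_
        intro k hk
        simp only [Finset.mem_Icc] at hk
        obtain ⟨j, rfl⟩ : ∃ j, k = j + 1 := ⟨k - 1, by omega⟩
        simp [pow_succ]
        ring
    _ = 1 := by rw [Finset.sum_neg_distrib, this]; norm_num

lemma myS1 (n : ℕ) : myS 1 n = myh 1 n := by
  induction n with
  | zero => simp [myS_zero_arg, myh]
  | succ m ih =>
    rw [key 0 m, ih, myS0 (m+1) (by omega), myh_succ]
    ring

lemma myS2 (n : ℕ) : myS 2 n = (1/2) * ((myh 1 n)^2 + myh 2 n) := by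
  induction n with
  | zero => simp [myS_zero_arg, myh]
  | succ m ih =>
    rw [key 1 m, ih, myS1 (m+1), myh_succ, myh_succ]
    have hn : ((m:ℝ)+1) ≠ 0 := by positivity
    field_simp
    ring

lemma myS3 (n : ℕ) : myS 3 n = (1/6) * ((myh 1 n)^3 + 3 * myh 1 n * myh 2 n + 2 * myh 3 n) := by
  induction n with
  | zero => simp [myS_zero_arg, myh]
  | succ m ih =>
    rw [key 2 m, ih, myS2 (m+1), myh_succ, myh_succ, myh_succ]
    have hn : ((m:ℝ)+1) ≠ 0 := by positivity
    field_simp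
    ring

lemma myS4 (n : ℕ) : myS 4 n = (1/24) * ((myh 1 n)^4 + 6 * (myh 1 n)^2 * myh 2 n
    + 8 * myh 1 n * myh 3 n + 3 * (myh 2 n)^2 + 6 * myh 4 n) := by
  induction n with
  | zero => simp [myS_zero_arg, myh]
  | succ m ih =>
    rw [key 3 m, ih, myS3 (m+1), myh_succ, myh_succ, myh_succ, myh_succ]
    have hn : ((m:ℝ)+1) ≠ 0 := by positivity
    field_simp
    ring

theorem stmt_13 (n : ℕ) (hn : 1 ≤ n) :
    ∑ k ∈ Finset.Icc 1 n, (Nat.choose n k : ℝ) * (-1) ^ (k - 1) / (k : ℝ) ^ 4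
      = (1 / 24) * ((∑ k ∈ Finset.Icc 1 n, (1 : ℝ) / k) ^ 4
        + 6 * (∑ k ∈ Finset.Icc 1 n, (1 : ℝ) / k) ^ 2 * (∑ k ∈ Finset.Icc 1 n, (1 : ℝ) / (k : ℝ) ^ 2)
        + 8 * (∑ k ∈ Finset.Icc 1 n, (1 : ℝ) / k) * (∑ k ∈ Finset.Icc 1 n, (1 : ℝ) / (k : ℝ) ^ 3)
        + 3 * (∑ k ∈ Finset.Icc 1 n, (1 : ℝ) / (k : ℝ) ^ 2) ^ 2
        + 6 * (∑ k ∈ Finset.Icc 1 n, (1 : ℝ) / (k : ℝ) ^ 4)) := by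
  simpa [myS, myh] using myS4 n
end

section
/- ∑_{n=1}^∞ (H_n^2 + H_n^{(2)})/2^n = 2 ζ(2) = π²/3. -/
open Finset Real
noncomputable def Hh (m : ℕ) : ℝ := ∑ k ∈ range m, 1 / (k + 1 : ℝ)

lemma Hh_succ (m : ℕ) : Hh (m+1) = Hh m + 1/(m+1 : ℝ) := by
  simp [Hh, sum_range_succ]

lemma Hh_nonneg (m : ℕ) : 0 ≤ Hh m := by
  refine sum_nonneg fun i _ => by positivity

lemma Hh_le (m : ℕ) : Hh m ≤ m := by
  calc Hh m ≤ ∑ k ∈ range m, (1:ℝ) := by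
        refine sum_le_sum fun i _ => ?_
        rw [div_le_one (by positivity)]; linarith [Nat.cast_nonneg (α := ℝ) i]
    _ = m := by simp

-- step 1 finite identity
lemma sq_add_sq2 (m : ℕ) :
    (Hh m)^2 + ∑ k ∈ range m, 1/((k:ℝ)+1)^2 = 2 * ∑ k ∈ range m, Hh (k+1) / (k+1) := by
  induction m with
  | zero => simp [Hh]
  | succ m ih =>
    rw [sum_range_succ, sum_range_succ (f := fun k => Hh (k+1) / ((k:ℝ)+1)), Hh_succ]
    push_cast
    have hm : ((m:ℝ)+1) ≠ 0 := by positivity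
    have key : ((1:ℝ)+(m:ℝ)*2+(m:ℝ)^2)⁻¹ = ((1:ℝ)+(m:ℝ))⁻¹^2 := by
      rw [inv_pow]
      congr 1
      ring
    linear_combination ih + key

lemma alt_sum_choose (m : ℕ) :
    ∑ j ∈ range (m+1), (-1:ℝ)^j * ((m+1).choose (j+1)) = 1 := by
  have h : ∑ i ∈ range (m+2), (-1:ℤ)^i * ((m+1).choose i) = 0 :=
    Int.alternating_sum_range_choose_of_ne (by omega)
  rw [Finset.sum_range_succ'] at h
  have := congrArg (fun z : ℤ => (z : ℝ)) h
  push_cast at this ⊢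
  have h2 : ∑ x ∈ range (m+1), (-1:ℝ)^(x+1) * (((m+1).choose (x+1) : ℕ) : ℝ)
      = -∑ j ∈ range (m+1), (-1:ℝ)^j * (((m+1).choose (j+1) : ℕ) : ℝ) := by
    rw [← Finset.sum_neg_distrib]
    refine sum_congr rfl fun j _ => by ring
  rw [h2, Nat.choose_zero_right] at this
  push_cast at this
  linarith [this]

lemma alt_binom_harmonic (m : ℕ) :
    ∑ j ∈ range m, (-1:ℝ)^j * (m.choose (j+1)) / (j+1) = Hh m := by
  induction m with
  | zero => simp [Hh]
  | succ m ih =>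
    have split : ∀ j, ((m+1).choose (j+1) : ℝ) = (m.choose j : ℝ) + (m.choose (j+1) : ℝ) := by
      intro j; rw [Nat.choose_succ_succ]; push_cast; ring
    have e1 : ∑ j ∈ range (m+1), (-1:ℝ)^j * ((m+1).choose (j+1)) / (j+1)
        = ∑ j ∈ range (m+1), (-1:ℝ)^j * (m.choose j) / (j+1)
          + ∑ j ∈ range (m+1), (-1:ℝ)^j * (m.choose (j+1)) / (j+1) := by
      rw [← sum_add_distrib]
      refine sum_congr rfl fun j _ => ?_
      rw [split]; ring
    have e2 : ∑ j ∈ range (m+1), (-1:ℝ)^j * (m.choose (j+1)) / (j+1)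
        = ∑ j ∈ range m, (-1:ℝ)^j * (m.choose (j+1)) / (j+1) := by
      rw [sum_range_succ, Nat.choose_succ_self]
      simp
    have key : ∀ j, ((m:ℝ)+1) * ((-1:ℝ)^j * (m.choose j) / (j+1))
        = (-1:ℝ)^j * ((m+1).choose (j+1)) := by
      intro j
      have h := Nat.add_one_mul_choose_eq m j
      have h' : ((m+1) * m.choose j : ℝ) = ((m+1).choose (j+1) : ℝ) * (j+1) := by
        exact_mod_cast congrArg (fun z : ℕ => (z : ℝ)) h
      have hj : ((j:ℝ)+1) ≠ 0 := by positivity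
      field_simp
      linear_combination h'
    have e3 : ∑ j ∈ range (m+1), (-1:ℝ)^j * (m.choose j) / (j+1) = 1/((m:ℝ)+1) := by
      have hm : ((m:ℝ)+1) ≠ 0 := by positivity
      rw [eq_div_iff hm, mul_comm, mul_sum]
      simp_rw [key]
      exact alt_sum_choose m
    rw [e1, e2, ih, e3, Hh_succ]
    ring

lemma euler_kernel (k : ℕ) :
    ∑ j ∈ range (k+1), (-1:ℝ)^j * (k.choose j) / ((j:ℝ)+1)^2
      = Hh (k+1) / ((k:ℝ)+1) := by
  have hk : ((k:ℝ)+1) ≠ 0 := by positivity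
  rw [eq_div_iff hk, sum_mul]
  have key2 : ∀ j, (-1:ℝ)^j * (k.choose j) / ((j:ℝ)+1)^2 * ((k:ℝ)+1)
      = (-1:ℝ)^j * ((k+1).choose (j+1)) / ((j:ℝ)+1) := by
    intro j
    have h' : ((k:ℝ)+1) * (k.choose j : ℝ) = ((k+1).choose (j+1) : ℝ) * ((j:ℝ)+1) := by
      exact_mod_cast congrArg (fun z : ℕ => (z : ℝ)) (Nat.add_one_mul_choose_eq k j)
    have hj : ((j:ℝ)+1) ≠ 0 := by positivity
    field_simp
    linear_combination h'
  simp_rw [key2]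
  exact alt_binom_harmonic (k+1)


lemma basel_shift : HasSum (fun n : ℕ => 1/((n:ℝ)+1)^2) (π^2/6) := by
  have hz : HasSum (fun n : ℕ => 1/(n:ℝ)^2) (π^2/6) := hasSum_zeta_two
  have h := (hasSum_nat_add_iff' (f := fun n : ℕ => 1/(n:ℝ)^2) 1).mpr hz
  simp only [Finset.range_one, Finset.sum_singleton, Nat.cast_zero] at h
  norm_num at h
  convert h using 2 with n
  · rfl
  push_cast
  ring

lemma basel_odd : HasSum (fun i : ℕ => 1/(2*(i:ℝ)+2)^2) (π^2/24) := by
  have e : (fun i : ℕ => 1/(2*(i:ℝ)+2)^2) = fun i : ℕ => (1/4) * (1/((i:ℝ)+1)^2) := by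
    funext i
    have : (2*(i:ℝ)+2) ≠ 0 := by positivity
    field_simp
    ring
  rw [e, show (π^2/24 : ℝ) = (1/4)*(π^2/6) by ring]
  exact basel_shift.mul_left _

lemma basel_even : HasSum (fun i : ℕ => 1/(2*(i:ℝ)+1)^2) (π^2/8) := by
  set g : ℕ → ℝ := fun n => 1/((n:ℝ)+1)^2 with hg
  have hodd : HasSum (fun i : ℕ => g (2*i+1)) (π^2/24) := by
    have e : (fun i : ℕ => g (2*i+1)) = fun i : ℕ => 1/(2*(i:ℝ)+2)^2 := by
      funext i; simp only [hg]; push_cast; ring_nf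
    rw [e]; exact basel_odd
  have hse : Summable (fun i : ℕ => g (2*i)) :=
    basel_shift.summable.comp_injective (fun a b h => by omega)
  have he : HasSum (fun i : ℕ => g (2*i)) (∑' i, g (2*i)) := hse.hasSum
  have htot := he.even_add_odd hodd
  have hA : ∑' i, g (2*i) = π^2/8 := by
    have := htot.unique basel_shift
    linarith
  rw [hA] at he
  have e2 : (fun i : ℕ => g (2*i)) = fun i : ℕ => 1/(2*(i:ℝ)+1)^2 := by
    funext i; simp only [hg]; push_cast; ring_nf
  rwa [e2] at he

lemma alt_basel : HasSum (fun j : ℕ => (-1:ℝ)^j/((j:ℝ)+1)^2) (π^2/12) := by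
  set f : ℕ → ℝ := fun j => (-1:ℝ)^j/((j:ℝ)+1)^2 with hf
  have he : HasSum (fun i : ℕ => f (2*i)) (π^2/8) := by
    have e : (fun i : ℕ => f (2*i)) = fun i : ℕ => 1/(2*(i:ℝ)+1)^2 := by
      funext i; simp only [hf, pow_mul]; push_cast; norm_num
    rw [e]; exact basel_even
  have ho : HasSum (fun i : ℕ => f (2*i+1)) (-(π^2/24)) := by
    have e : (fun i : ℕ => f (2*i+1)) = fun i : ℕ => -(1/(2*(i:ℝ)+2)^2) := by
      funext i
      simp only [hf]
      rw [Odd.neg_one_pow ⟨i, by ring⟩]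
      have h2 : ((2*i+1:ℕ):ℝ) + 1 = 2*(i:ℝ)+2 := by push_cast; ring
      rw [h2]
      ring
    rw [e]; exact basel_odd.neg
  have := he.even_add_odd ho
  convert this using 1
  ring

lemma choose_geom (j : ℕ) :
    HasSum (fun k : ℕ => (k.choose j : ℝ) * (1/2:ℝ)^(k+1)) 1 := by
  have h := hasSum_choose_mul_geometric_of_norm_lt_one (𝕜 := ℝ) j
    (r := 1/2) (by norm_num)
  have h2 : HasSum (fun n : ℕ => ((n+j).choose j : ℝ) * (1/2:ℝ)^(n+j+1)) 1 := by
    have h3 := h.mul_left ((1/2:ℝ)^(j+1))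
    have e : (fun n : ℕ => (1/2:ℝ)^(j+1) * (((n+j).choose j : ℝ) * (1/2:ℝ)^n))
        = fun n : ℕ => ((n+j).choose j : ℝ) * (1/2:ℝ)^(n+j+1) := by
      funext n
      conv_rhs => rw [show n+j+1 = (j+1)+n from by omega, pow_add]
      ring
    rw [e] at h3
    convert h3 using 1
    · rfl
    norm_num
  have hzero : ∑ i ∈ Finset.range j, (i.choose j : ℝ) * (1/2:ℝ)^(i+1) = 0 := by
    refine Finset.sum_eq_zero fun i hi => ?_
    rw [Nat.choose_eq_zero_of_lt (Finset.mem_range.mp hi)]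
    simp
  refine (hasSum_nat_add_iff' (f := fun k : ℕ => (k.choose j : ℝ) * (1/2:ℝ)^(k+1)) j).mp ?_
  rw [hzero, sub_zero]
  exact h2


noncomputable def GG (k j : ℕ) : ℝ :=
  ((-1:ℝ)^j * (k.choose j) / ((j:ℝ)+1)^2) * (1/2:ℝ)^(k+1)

lemma GG_abs (k j : ℕ) : |GG k j| = ((k.choose j : ℝ) / ((j:ℝ)+1)^2) * (1/2:ℝ)^(k+1) := by
  have h1 : (0:ℝ) ≤ (k.choose j : ℝ) / ((j:ℝ)+1)^2 := by positivity
  have h2 : (0:ℝ) ≤ (1/2:ℝ)^(k+1) := by positivity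
  rw [GG, abs_mul, abs_of_nonneg h2, abs_div, abs_mul, abs_pow, abs_neg, abs_one,
    one_pow, one_mul, abs_of_nonneg (Nat.cast_nonneg _), abs_of_nonneg (by positivity : (0:ℝ) ≤ ((j:ℝ)+1)^2)]

lemma nat_id (k j : ℕ) :
    (k+1)*(k+2)*(k.choose j) = (j+1)*(j+2)*((k+2).choose (j+2)) := by
  have h1 := Nat.add_one_mul_choose_eq k j
  have h2 := Nat.add_one_mul_choose_eq (k+1) (j+1)
  calc (k+1)*(k+2)*(k.choose j) = (k+2)*((k+1)*(k.choose j)) := by ring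
    _ = (k+2)*((k+1).choose (j+1)*(j+1)) := by rw [← h1]
    _ = (j+1)*((k+2)*((k+1).choose (j+1))) := by ring
    _ = (j+1)*((k+2).choose (j+2)*(j+2)) := by rw [← h2]
    _ = (j+1)*(j+2)*((k+2).choose (j+2)) := by ring

lemma term_bound (k j : ℕ) :
    (k.choose j : ℝ) / ((j:ℝ)+1)^2 ≤ 2 * ((k+2).choose (j+2) : ℝ) / (((k:ℝ)+1)*((k:ℝ)+2)) := by
  have hid : (((k:ℝ)+1)*((k:ℝ)+2))*(k.choose j : ℝ)
      = (((j:ℝ)+1)*((j:ℝ)+2))*(((k+2).choose (j+2) : ℕ) : ℝ) := by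
    exact_mod_cast congrArg (fun z : ℕ => (z:ℝ)) (nat_id k j)
  have hj : (0:ℝ) < ((j:ℝ)+1)^2 := by positivity
  have hk : (0:ℝ) < ((k:ℝ)+1)*((k:ℝ)+2) := by positivity
  rw [div_le_div_iff₀ hj hk]
  have hc : (0:ℝ) ≤ (((k+2).choose (j+2) : ℕ) : ℝ) := Nat.cast_nonneg _
  nlinarith [hid, hc, mul_nonneg (mul_nonneg (show (0:ℝ) ≤ (j:ℝ)+1 by positivity)
    (Nat.cast_nonneg (α := ℝ) j)) hc]

lemma row_sum_bound (k : ℕ) :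
    ∑ j ∈ range (k+1), |GG k j| ≤ 4 / (((k:ℝ)+1)*((k:ℝ)+2)) := by
  have hstep : ∑ j ∈ range (k+1), |GG k j|
      ≤ ∑ j ∈ range (k+1), (2 * ((k+2).choose (j+2) : ℝ) / (((k:ℝ)+1)*((k:ℝ)+2))) * (1/2:ℝ)^(k+1) := by
    refine sum_le_sum fun j _ => ?_
    rw [GG_abs]
    exact mul_le_mul_of_nonneg_right (term_bound k j) (by positivity)
  refine hstep.trans ?_
  rw [← sum_mul]
  have hchoose : ∑ j ∈ range (k+1), (((k+2).choose (j+2) : ℕ) : ℝ) ≤ 2^(k+2) := by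
    have hnat : ∑ j ∈ range (k+1), (k+2).choose (j+2) ≤ 2^(k+2) := by
      calc ∑ j ∈ range (k+1), (k+2).choose (j+2)
          = ∑ i ∈ Finset.Ico 2 (k+3), (k+2).choose i := by
            rw [Finset.sum_Ico_eq_sum_range, show k+3-2 = k+1 from by omega]
            exact Finset.sum_congr rfl fun i _ => by rw [Nat.add_comm i 2]
        _ ≤ ∑ i ∈ range (k+3), (k+2).choose i :=
            Finset.sum_le_sum_of_subset (by intro x hx; simp at hx ⊢; omega)
        _ = 2^(k+2) := Nat.sum_range_choose (k+2)
    exact_mod_cast hnat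
  have hfactor : (0:ℝ) < ((k:ℝ)+1)*((k:ℝ)+2) := by positivity
  have e : ∑ j ∈ range (k+1), 2 * (((k+2).choose (j+2) : ℕ) : ℝ) / (((k:ℝ)+1)*((k:ℝ)+2))
      = (2 / (((k:ℝ)+1)*((k:ℝ)+2))) * ∑ j ∈ range (k+1), (((k+2).choose (j+2) : ℕ) : ℝ) := by
    rw [mul_sum]
    exact Finset.sum_congr rfl fun j _ => by ring
  rw [e]
  have h2 : (2 / (((k:ℝ)+1)*((k:ℝ)+2))) * (2^(k+2):ℝ) * (1/2:ℝ)^(k+1) = 4 / (((k:ℝ)+1)*((k:ℝ)+2)) := by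
    have h0 : (2:ℝ)^(k+1) ≠ 0 := by positivity
    have hp : (2:ℝ)^(k+2) * (1/2:ℝ)^(k+1) = 2 := by
      rw [div_pow, one_pow, pow_succ (2:ℝ) (k+1)]
      field_simp
    rw [mul_assoc, hp]
    ring
  calc (2 / (((k:ℝ)+1)*((k:ℝ)+2))) * (∑ j ∈ range (k+1), (((k+2).choose (j+2) : ℕ) : ℝ)) * (1/2:ℝ)^(k+1)
      ≤ (2 / (((k:ℝ)+1)*((k:ℝ)+2))) * (2^(k+2):ℝ) * (1/2:ℝ)^(k+1) := by
        have h3 : (0:ℝ) ≤ (1/2:ℝ)^(k+1) := by positivity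
        have h4 : (0:ℝ) ≤ 2 / (((k:ℝ)+1)*((k:ℝ)+2)) := by positivity
        exact mul_le_mul_of_nonneg_right (mul_le_mul_of_nonneg_left hchoose h4) h3
    _ = 4 / (((k:ℝ)+1)*((k:ℝ)+2)) := h2

lemma GG_zero {k j : ℕ} (h : j ∉ range (k+1)) : GG k j = 0 := by
  have : k < j := by simpa using h
  simp [GG, Nat.choose_eq_zero_of_lt this]

lemma GG_summable : Summable (Function.uncurry GG) := by
  rw [← summable_abs_iff]
  refine (summable_prod_of_nonneg (fun p => abs_nonneg _)).mpr ⟨fun k => ?_, ?_⟩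
  · exact summable_of_ne_finset_zero (s := range (k+1))
      (fun j hj => by simp [Function.uncurry, GG_zero hj])
  · refine Summable.of_nonneg_of_le (fun k => tsum_nonneg fun j => abs_nonneg _)
      (fun k => ?_) ((basel_shift.summable.mul_left 4).congr (fun k => by rw [mul_one_div]))
    have he : ∑' j, |Function.uncurry GG (k, j)| = ∑ j ∈ range (k+1), |GG k j| :=
      tsum_eq_sum (fun j hj => by simp [Function.uncurry, GG_zero hj])
    rw [he]
    refine (row_sum_bound k).trans ?_
    rw [div_le_div_iff₀ (by positivity) (by positivity)]
    nlinarith [Nat.cast_nonneg (α := ℝ) k, sq_nonneg ((k:ℝ)+1)]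

lemma stepB : ∑' k : ℕ, (Hh (k+1)/((k:ℝ)+1)) * (1/2:ℝ)^(k+1) = π^2/12 := by
  have hrow : ∀ k : ℕ, ∑' j, GG k j = (Hh (k+1)/((k:ℝ)+1)) * (1/2:ℝ)^(k+1) := by
    intro k
    rw [tsum_eq_sum (s := range (k+1)) (fun j hj => GG_zero hj)]
    rw [show ∑ j ∈ range (k+1), GG k j
        = (∑ j ∈ range (k+1), (-1:ℝ)^j * (k.choose j) / ((j:ℝ)+1)^2) * (1/2:ℝ)^(k+1) from by
      rw [sum_mul]; exact Finset.sum_congr rfl fun j _ => rfl]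
    rw [euler_kernel]
  have hcol : ∀ j : ℕ, ∑' k, GG k j = (-1:ℝ)^j/((j:ℝ)+1)^2 := by
    intro j
    have e : (fun k => GG k j)
        = fun k => ((-1:ℝ)^j/((j:ℝ)+1)^2) * ((k.choose j : ℝ) * (1/2:ℝ)^(k+1)) := by
      funext k; rw [GG]; ring
    rw [e, tsum_mul_left, (choose_geom j).tsum_eq, mul_one]
  calc ∑' k, (Hh (k+1)/((k:ℝ)+1)) * (1/2:ℝ)^(k+1)
      = ∑' (k : ℕ) (j : ℕ), GG k j := by
        refine tsum_congr fun k => (hrow k).symm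
    _ = ∑' (j : ℕ) (k : ℕ), GG k j := (GG_summable.tsum_comm).symm
    _ = ∑' j : ℕ, (-1:ℝ)^j/((j:ℝ)+1)^2 := tsum_congr fun j => hcol j
    _ = π^2/12 := alt_basel.tsum_eq


noncomputable def FF (n k : ℕ) : ℝ :=
  if k ≤ n then (Hh (k+1)/((k:ℝ)+1)) * (1/2:ℝ)^(n+1) else 0

lemma ck_nonneg (k : ℕ) : 0 ≤ Hh (k+1)/((k:ℝ)+1) := by
  have := Hh_nonneg (k+1); positivity

lemma ck_le_one (k : ℕ) : Hh (k+1)/((k:ℝ)+1) ≤ 1 := by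
  rw [div_le_one (by positivity)]
  have := Hh_le (k+1)
  push_cast at this
  linarith

lemma FF_nonneg (n k : ℕ) : 0 ≤ FF n k := by
  rw [FF]; split_ifs
  · have := ck_nonneg k; positivity
  · exact le_refl 0
  
lemma FF_zero {n k : ℕ} (h : k ∉ range (n+1)) : FF n k = 0 := by
  rw [FF, if_neg (by simpa using h)]

lemma FF_row (n : ℕ) :
    ∑' k, FF n k = ∑ k ∈ range (n+1), (Hh (k+1)/((k:ℝ)+1)) * (1/2:ℝ)^(n+1) := by
  rw [tsum_eq_sum (s := range (n+1)) (fun k hk => FF_zero hk)]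
  refine Finset.sum_congr rfl fun k hk => ?_
  have hk' := Finset.mem_range.mp hk
  rw [FF, if_pos (by omega)]

lemma FF_summable : Summable (Function.uncurry fun n k => FF n k) := by
  have hbound : Summable (fun n : ℕ => ((n:ℝ)+1)*(1/2:ℝ)^(n+1)) := by
    have hg : Summable fun n : ℕ => ((n:ℝ))*(1/2:ℝ)^n := by
      simpa using summable_pow_mul_geometric_of_norm_lt_one (R := ℝ) 1
        (r := (1/2:ℝ)) (by norm_num)
    have h2 := (summable_nat_add_iff (f := fun n : ℕ => ((n:ℝ))*(1/2:ℝ)^n) 1).mpr hg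
    exact h2.congr fun n => by push_cast; ring
  refine (summable_prod_of_nonneg (fun p => FF_nonneg p.1 p.2)).mpr ⟨fun n => ?_, ?_⟩
  · exact summable_of_ne_finset_zero (s := range (n+1)) (fun k hk => FF_zero hk)
  · refine Summable.of_nonneg_of_le (fun n => tsum_nonneg fun k => FF_nonneg n k)
      (fun n => ?_) hbound
    rw [show ∑' k, (fun n k => FF n k) n k = ∑' k, FF n k from rfl, FF_row]
    calc ∑ k ∈ range (n+1), (Hh (k+1)/((k:ℝ)+1)) * (1/2:ℝ)^(n+1)
        ≤ ∑ k ∈ range (n+1), 1 * (1/2:ℝ)^(n+1) := by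
          refine sum_le_sum fun k _ => mul_le_mul_of_nonneg_right (ck_le_one k) (by positivity)
      _ = ((n:ℝ)+1)*(1/2:ℝ)^(n+1) := by
          rw [Finset.sum_const, Finset.card_range]
          push_cast; ring

lemma FF_col (k : ℕ) :
    ∑' n, FF n k = (Hh (k+1)/((k:ℝ)+1)) * (1/2:ℝ)^k := by
  have h0 : HasSum (fun m : ℕ => (1/2:ℝ)^m) 2 := by
    have := hasSum_geometric_of_lt_one (r := (1/2:ℝ)) (by norm_num) (by norm_num)
    norm_num at this
    exact this
  have hgeo : HasSum (fun m : ℕ => (1/2:ℝ)^(m+k+1)) ((1/2:ℝ)^k) := by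
    have h1 := h0.mul_left ((1/2:ℝ)^(k+1))
    have e : (fun m : ℕ => (1/2:ℝ)^(k+1) * (1/2:ℝ)^m)
        = fun m : ℕ => (1/2:ℝ)^(m+k+1) := by
      funext m
      rw [← pow_add, show k+1+m = m+k+1 from by omega]
    rw [e] at h1
    convert h1 using 1
    · rfl
    rw [pow_succ]
    ring
  have hshift : HasSum (fun m : ℕ => FF (m+k) k)
      ((Hh (k+1)/((k:ℝ)+1)) * (1/2:ℝ)^k) := by
    have := hgeo.mul_left (Hh (k+1)/((k:ℝ)+1))
    refine this.congr_fun fun m => ?_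
    rw [FF, if_pos (by omega)]
  have hzero : ∑ i ∈ range k, FF i k = 0 :=
    Finset.sum_eq_zero fun i hi => by
      rw [FF, if_neg (by simpa using Finset.mem_range.mp hi)]
  have := (hasSum_nat_add_iff' (f := fun n => FF n k) k).mp (by rw [hzero, sub_zero]; exact hshift)
  exact this.tsum_eq

lemma icc1 (n : ℕ) : ∑ k ∈ Finset.Icc 1 (n+1), (1:ℝ)/k = Hh (n+1) := by
  induction n with
  | zero => simp [Hh]
  | succ n ih =>
    rw [Finset.sum_Icc_succ_top (by omega : 1 ≤ n+1+1), ih]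
    rw [show Hh (n+1+1) = Hh (n+1) + 1/((n:ℝ)+1+1) from by rw [Hh_succ]; push_cast; ring]
    push_cast
    ring

lemma icc2 (n : ℕ) :
    ∑ k ∈ Finset.Icc 1 (n+1), (1:ℝ)/(k:ℝ)^2 = ∑ k ∈ range (n+1), 1/((k:ℝ)+1)^2 := by
  induction n with
  | zero => simp
  | succ n ih =>
    rw [Finset.sum_Icc_succ_top (by omega : 1 ≤ n+1+1), ih]
    conv_rhs => rw [sum_range_succ]
    push_cast
    ring

theorem stmt_16 :
    ∑' n : ℕ, ((∑ k ∈ Finset.Icc 1 (n + 1), (1 : ℝ) / k) ^ 2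
        + ∑ k ∈ Finset.Icc 1 (n + 1), (1 : ℝ) / (k : ℝ) ^ 2) / 2 ^ (n + 1)
      = Real.pi ^ 2 / 3 := by
  have hterm : ∀ n : ℕ, ((∑ k ∈ Finset.Icc 1 (n + 1), (1 : ℝ) / k) ^ 2
        + ∑ k ∈ Finset.Icc 1 (n + 1), (1 : ℝ) / (k : ℝ) ^ 2) / 2 ^ (n + 1)
      = 2 * ∑' k, FF n k := by
    intro n
    rw [icc1, icc2, sq_add_sq2, FF_row, Finset.mul_sum, Finset.mul_sum]
    rw [div_eq_mul_inv, Finset.sum_mul]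
    refine Finset.sum_congr rfl fun k _ => ?_
    rw [show ((2:ℝ)^(n+1))⁻¹ = (1/2:ℝ)^(n+1) from by rw [one_div, inv_pow]]
    ring
  calc ∑' n : ℕ, ((∑ k ∈ Finset.Icc 1 (n + 1), (1 : ℝ) / k) ^ 2
        + ∑ k ∈ Finset.Icc 1 (n + 1), (1 : ℝ) / (k : ℝ) ^ 2) / 2 ^ (n + 1)
      = ∑' n : ℕ, 2 * ∑' k, FF n k := tsum_congr hterm
    _ = 2 * ∑' (n : ℕ) (k : ℕ), FF n k := tsum_mul_left
    _ = 2 * ∑' (k : ℕ) (n : ℕ), FF n k := by rw [FF_summable.tsum_comm]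
    _ = 2 * ∑' k : ℕ, (Hh (k+1)/((k:ℝ)+1)) * (1/2:ℝ)^k := by
        rw [tsum_congr fun k => FF_col k]
    _ = 2 * ∑' k : ℕ, 2 * ((Hh (k+1)/((k:ℝ)+1)) * (1/2:ℝ)^(k+1)) := by
        refine congrArg _ (tsum_congr fun k => ?_)
        rw [pow_succ]
        ring
    _ = 2 * (2 * (π^2/12)) := by rw [tsum_mul_left, stepB]
    _ = Real.pi ^ 2 / 3 := by ring
end
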